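/- Suppose 𝒜 is an a.d.-family. If the splitting partial order ℙ_𝒜 fails to satisfy the c.c.c. (i.e., has an uncountable antichain), then 𝒜 contains an n-Luzin gap for some n ∈ ℕ. -/

import Mathlib

open Set Filter Cardinal

noncomputable section

/-- The Banach space `ℓ∞` of bounded real sequences with the sup norm. -/
abbrev Linfty : Type := lp (fun _ : ℕ => ℝ) ⊤

/-- An a.d.-family: an uncountable family of infinite subsets of `ℕ` which is
pairwise almost disjoint. -/
def ADFamily (𝒜 : Set (Set ℕ)) : Prop :=
  ¬𝒜.Countable ∧ (∀ A ∈ 𝒜, A.Infinite) ∧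
    ∀ A ∈ 𝒜, ∀ B ∈ 𝒜, A ≠ B → (A ∩ B).Finite

/-- A maximal a.d.-family. -/
def MaximalADFamily (𝒜 : Set (Set ℕ)) : Prop :=
  ADFamily 𝒜 ∧ ∀ X : Set ℕ, X.Infinite → ∃ A ∈ 𝒜, (X ∩ A).Infinite

/-- `A =* B` : the symmetric difference is finite. -/
def eqStar (A B : Set ℕ) : Prop := (symmDiff A B).Finite

/-- Finite subfamilies `a`, `b` of `𝒜` represent the pair `p`. -/
def Represents (𝒜 : Set (Set ℕ)) (p : Set ℕ × Set ℕ) (a b : Finset (Set ℕ)) : Prop :=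
  ↑a ⊆ 𝒜 ∧ ↑b ⊆ 𝒜 ∧ eqStar p.1 (⋃ A ∈ a, A) ∧ eqStar p.2 (⋃ B ∈ b, B)

/-- `p` is a condition of the splitting partial order `ℙ_𝒜`. -/
def SplitCond (𝒜 : Set (Set ℕ)) (p : Set ℕ × Set ℕ) : Prop :=
  p.1 ∩ p.2 = ∅ ∧ ∃ a b : Finset (Set ℕ), Represents 𝒜 p a b

/-- `Extends p q` means `p ≤ q` in `ℙ_𝒜`. -/
def Extends (p q : Set ℕ × Set ℕ) : Prop := q.1 ⊆ p.1 ∧ q.2 ⊆ p.2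

/-- Compatibility in `ℙ_𝒜`. -/
def Compat (𝒜 : Set (Set ℕ)) (p q : Set ℕ × Set ℕ) : Prop :=
  ∃ r, SplitCond 𝒜 r ∧ Extends r p ∧ Extends r q

/-- An antichain of `ℙ_𝒜`: a set of pairwise incompatible conditions. -/
def SplitAntichain (𝒜 : Set (Set ℕ)) (P : Set (Set ℕ × Set ℕ)) : Prop :=
  (∀ p ∈ P, SplitCond 𝒜 p) ∧ ∀ p ∈ P, ∀ q ∈ P, p ≠ q → ¬Compat 𝒜 p q

/-- `ℙ_𝒜` satisfies the countable chain condition. -/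
def SplitCCC (𝒜 : Set (Set ℕ)) : Prop :=
  ∀ P : Set (Set ℕ × Set ℕ), SplitAntichain 𝒜 P → P.Countable

/-- A centered subset of `ℙ_𝒜`: every finite subset has a common lower bound in `ℙ_𝒜`. -/
def SplitCentered (𝒜 : Set (Set ℕ)) (P : Set (Set ℕ × Set ℕ)) : Prop :=
  ∀ F : Finset (Set ℕ × Set ℕ), ↑F ⊆ P →
    ∃ r, SplitCond 𝒜 r ∧ ∀ p ∈ F, Extends r p

/-- `ℙ_𝒜` is σ-centered. -/
def SplitSigmaCentered (𝒜 : Set (Set ℕ)) : Prop :=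
  ∃ P : ℕ → Set (Set ℕ × Set ℕ),
    (⋃ n, P n) = {p | SplitCond 𝒜 p} ∧ ∀ n, SplitCentered 𝒜 (P n)

/-- `ℙ_𝒜` has precaliber `κ`. -/
def SplitPrecaliber (𝒜 : Set (Set ℕ)) (κ : Cardinal) : Prop :=
  ∀ P : Set (Set ℕ × Set ℕ), (∀ p ∈ P, SplitCond 𝒜 p) → #P = κ →
    ∃ Q ⊆ P, #Q = κ ∧ SplitCentered 𝒜 Q

/-- Two conditions are essentially distinct if their (uniquely determined)
representing finite subfamilies differ on both coordinates. -/
def EssDistinct (𝒜 : Set (Set ℕ)) (p q : Set ℕ × Set ℕ) : Prop :=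
  ∀ ap bp aq bq : Finset (Set ℕ), Represents 𝒜 p ap bp → Represents 𝒜 q aq bq →
    ap ≠ aq ∧ bp ≠ bq

/-- An antiramsey a.d.-family. -/
def Antiramsey (𝒜 : Set (Set ℕ)) : Prop :=
  ADFamily 𝒜 ∧
  ∀ P : Set (Set ℕ × Set ℕ), (∀ p ∈ P, SplitCond 𝒜 p) → ¬P.Countable →
    (∀ p ∈ P, ∀ q ∈ P, p ≠ q → EssDistinct 𝒜 p q) →
    (∃ p ∈ P, ∃ q ∈ P, p ≠ q ∧ Compat 𝒜 p q) ∧ (∃ p ∈ P, ∃ q ∈ P, ¬Compat 𝒜 p q)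

/-- The first uncountable ordinal. -/
def omega1 : Ordinal.{0} := (Cardinal.aleph 1).ord

/-- A Luzin family. -/
def IsLuzinFamily (𝒜 : Set (Set ℕ)) : Prop :=
  ADFamily 𝒜 ∧ ∃ A : Ordinal.{0} → Set ℕ,
    (∀ ξ < omega1, A ξ ∈ 𝒜) ∧
    (∀ B ∈ 𝒜, ∃ ξ < omega1, A ξ = B) ∧
    (∀ ξ < omega1, ∀ η < omega1, ξ ≠ η → A ξ ≠ A η) ∧
    ∀ η < omega1, ∀ m : ℕ, {ξ : Ordinal | ξ < η ∧ sSup (A ξ ∩ A η) = m}.Finite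

/-- `(B i : i < n)` forms an `n`-Luzin gap. -/
def IsNLuzinGap (n : ℕ) (B : Fin n → Ordinal.{0} → Set ℕ) : Prop :=
  (∀ i : Fin n, ∀ α < omega1, ∀ β < omega1, α ≠ β → B i α ≠ B i β) ∧
  (∀ i j : Fin n, i ≠ j → ∀ α < omega1, ∀ β < omega1, B i α ≠ B j β) ∧
  ∃ m : ℕ,
    (∀ i j : Fin n, i < j → ∀ α < omega1, B i α ∩ B j α ⊆ Set.Iio m) ∧
    (∀ α < omega1, ∀ β < omega1, α ≠ β →
      ¬(⋃ (i : Fin n) (j : Fin n) (_ : i ≠ j), B i α ∩ B j β) ⊆ Set.Iio m)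

/-- `𝒜` contains an `n`-Luzin gap. -/
def ContainsNLuzinGap (𝒜 : Set (Set ℕ)) (n : ℕ) : Prop :=
  ∃ B : Fin n → Ordinal.{0} → Set ℕ,
    (∀ i : Fin n, ∀ α < omega1, B i α ∈ 𝒜) ∧ IsNLuzinGap n B

-- The characteristic function of `A ⊆ ℕ` as an element of `ℓ∞`.
open Classical in
def indicatorLinfty (A : Set ℕ) : Linfty :=
  ⟨fun n => if n ∈ A then (1 : ℝ) else 0, by
    apply memℓp_infty
    refine ⟨1, ?_⟩
    rintro x ⟨n, rfl⟩
    dsimp only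
    split <;> simp⟩

/-- The subset `c₀` of `ℓ∞`. -/
def c0Set : Set Linfty := {f | Tendsto (fun n => f n) atTop (nhds 0)}

/-- The Johnson–Lindenstrauss space `X_𝒜`: the closed linear span of
`c₀ ∪ {1_A : A ∈ 𝒜}` in `ℓ∞`, as a (closed) submodule. -/
def XA (𝒜 : Set (Set ℕ)) : Submodule ℝ Linfty :=
  (Submodule.span ℝ (c0Set ∪ indicatorLinfty '' 𝒜)).topologicalClosure

/-- The norm `‖·‖_{∞,2}` on `ℓ∞`. -/
def norm12 (f : Linfty) : ℝ :=
  ‖f‖ + Real.sqrt (∑' n : ℕ, (f n) ^ 2 / 2 ^ (n + 1))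

/-- The unit sphere of `(X_𝒜, ‖·‖∞)`. -/
def sphereInf (𝒜 : Set (Set ℕ)) : Set Linfty :=
  {f : Linfty | f ∈ XA 𝒜 ∧ ‖f‖ = 1}

/-- The unit sphere of `(X_𝒜, ‖·‖_{∞,2})`. -/
def sphere12 (𝒜 : Set (Set ℕ)) : Set Linfty :=
  {f : Linfty | f ∈ XA 𝒜 ∧ norm12 f = 1}

/-- The Open Coloring Axiom. -/
def OCA : Prop :=
  ∀ (X : Type) [MetricSpace X], TopologicalSpace.SeparableSpace X →
    ∀ K : Set (X × X), IsOpen K → (∀ x y : X, (x, y) ∈ K → (y, x) ∈ K) →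
      (∃ Y : Set X, ¬Y.Countable ∧ ∀ x ∈ Y, ∀ y ∈ Y, x ≠ y → (x, y) ∈ K) ∨
      (∃ C : ℕ → Set X, (⋃ n, C n) = Set.univ ∧
        ∀ n, ∀ x ∈ C n, ∀ y ∈ C n, x ≠ y → (x, y) ∉ K)

/-- An `ℝ`-embeddable a.d.-family. -/
def REmbeddable (𝒜 : Set (Set ℕ)) : Prop :=
  ∃ (f : ℕ → ℚ) (r : Set ℕ → ℝ), Function.Injective f ∧
    (∀ A ∈ 𝒜, Irrational (r A) ∧
      ∀ ε : ℝ, 0 < ε → {n ∈ A | ε ≤ |(f n : ℝ) - r A|}.Finite) ∧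
    (∀ A ∈ 𝒜, ∀ B ∈ 𝒜, A ≠ B → r A ≠ r B)

/-- The Continuum Hypothesis. -/
def CH : Prop := (Cardinal.continuum : Cardinal.{0}) = Cardinal.aleph 1

end

-- AUX LEMMAS (to be inserted before statement7)
section Aux

lemma pigeon' {α β : Type*} {S : Set α} (hS : ¬S.Countable) (f : α → β)
    (him : ((f '' S)).Countable) : ∃ y, ¬(S ∩ f ⁻¹' {y}).Countable := by
  by_contra h
  push_neg at h
  apply hS
  have hsub : S ⊆ ⋃ y ∈ f '' S, (S ∩ f ⁻¹' {y}) := fun x hx =>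
    Set.mem_biUnion ⟨x, hx, rfl⟩ ⟨hx, rfl⟩
  exact (him.biUnion fun y _ => h y).mono hsub

lemma pigeonC' {α β : Type*} [Countable β] {S : Set α} (hS : ¬S.Countable) (f : α → β) :
    ∃ y, ¬(S ∩ f ⁻¹' {y}).Countable :=
  pigeon' hS f (Set.to_countable _)

lemma delta_system_card' {X : Type*} [DecidableEq X] (n : ℕ) :
    ∀ 𝒞 : Set (Finset X), ¬𝒞.Countable → (∀ s ∈ 𝒞, s.card = n) →
    ∃ R : Finset X, ∃ 𝒟 ⊆ 𝒞, ¬𝒟.Countable ∧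
      ∀ s ∈ 𝒟, ∀ t ∈ 𝒟, s ≠ t → s ∩ t = R := by
  classical
  induction n with
  | zero =>
    intro 𝒞 hu hc
    exfalso
    apply hu
    have : 𝒞 ⊆ {∅} := by
      intro s hs
      simp [Finset.card_eq_zero.mp (hc s hs)]
    exact (Set.countable_singleton _).mono this
  | succ n ih =>
    intro 𝒞 hu hc
    by_cases hx : ∃ x, ¬{s ∈ 𝒞 | x ∈ s}.Countable
    · obtain ⟨x, hxu⟩ := hx
      set 𝒞x := {s ∈ 𝒞 | x ∈ s} with h𝒞x
      set 𝒞' := (fun s : Finset X => s.erase x) '' 𝒞x with h𝒞'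
      have hu' : ¬𝒞'.Countable := by
        intro hco
        apply hxu
        have : 𝒞x ⊆ (fun s : Finset X => insert x s) '' 𝒞' := by
          rintro s ⟨hs, hxs⟩
          exact ⟨s.erase x, ⟨s, ⟨hs, hxs⟩, rfl⟩, Finset.insert_erase hxs⟩
        exact (hco.image _).mono this
      have hc' : ∀ s ∈ 𝒞', s.card = n := by
        rintro s ⟨t, ⟨ht, hxt⟩, rfl⟩
        rw [Finset.card_erase_of_mem hxt, hc t ht]
        rfl
      obtain ⟨R', 𝒟', h𝒟'sub, h𝒟'u, h𝒟'⟩ := ih 𝒞' hu' hc'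
      refine ⟨insert x R', {s ∈ 𝒞x | s.erase x ∈ 𝒟'}, ?_, ?_, ?_⟩
      · exact fun s hs => hs.1.1
      · intro hco
        apply h𝒟'u
        have : 𝒟' ⊆ (fun s : Finset X => s.erase x) '' {s ∈ 𝒞x | s.erase x ∈ 𝒟'} := by
          intro t ht
          obtain ⟨s, hs, rfl⟩ := h𝒟'sub ht
          exact ⟨s, ⟨hs, ht⟩, rfl⟩
        exact ((hco.image _).mono this)
      · rintro s ⟨⟨hs𝒞, hxs⟩, hse⟩ t ⟨⟨ht𝒞, hxt⟩, hte⟩ hst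
        have hne : s.erase x ≠ t.erase x := by
          intro h
          apply hst
          rw [← Finset.insert_erase hxs, ← Finset.insert_erase hxt, h]
        have h1 : (s ∩ t).erase x = s.erase x ∩ t.erase x := by
          ext y; simp only [Finset.mem_erase, Finset.mem_inter]; tauto
        have hx_st : x ∈ s ∩ t := Finset.mem_inter.mpr ⟨hxs, hxt⟩
        rw [← Finset.insert_erase hx_st, h1, h𝒟' _ hse _ hte hne]
    · push_neg at hx
      have hzorn : ∀ c ⊆ {M : Set (Finset X) | M ⊆ 𝒞 ∧
          ∀ s ∈ M, ∀ t ∈ M, s ≠ t → s ∩ t = ∅}, IsChain (· ⊆ ·) c →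
          ∃ ub ∈ {M : Set (Finset X) | M ⊆ 𝒞 ∧
          ∀ s ∈ M, ∀ t ∈ M, s ≠ t → s ∩ t = ∅}, ∀ s ∈ c, s ⊆ ub := by
        intro c hc hchain
        refine ⟨⋃₀ c, ⟨?_, ?_⟩, fun s hs => Set.subset_sUnion_of_mem hs⟩
        · exact fun s ⟨M, hMc, hsM⟩ => (hc hMc).1 hsM
        · rintro s ⟨M1, hM1, hs1⟩ t ⟨M2, hM2, ht2⟩ hst
          rcases hchain.total hM1 hM2 with h | h
          · exact (hc hM2).2 s (h hs1) t ht2 hst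
          · exact (hc hM1).2 s hs1 t (h ht2) hst
      obtain ⟨M, hM⟩ := zorn_subset _ hzorn
      by_cases hMu : M.Countable
      · exfalso
        apply hu
        have hE : (⋃ s ∈ M, (↑s : Set X)).Countable :=
          hMu.biUnion fun s _ => s.finite_toSet.countable
        have hsub : 𝒞 ⊆ M ∪ ⋃ x ∈ ⋃ s ∈ M, (↑s : Set X), {s ∈ 𝒞 | x ∈ s} := by
          intro t ht
          by_cases htM : t ∈ M
          · exact Or.inl htM
          · right
            have hni : ¬(insert t M ∈ {M : Set (Finset X) | M ⊆ 𝒞 ∧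
                ∀ s ∈ M, ∀ t ∈ M, s ≠ t → s ∩ t = ∅}) := by
              intro hins
              exact htM (hM.2 hins (Set.subset_insert t M) (Set.mem_insert t M))
            have hM' := hM.1
            simp only [Set.mem_setOf_eq] at hni
            push_neg at hni
            obtain ⟨s, hs, t', ht', hne, hne'⟩ := hni (Set.insert_subset_iff.mpr ⟨ht, hM'.1⟩)
            have key : ∃ s ∈ M, s ∩ t ≠ ∅ := by
              rcases hs with rfl | hsM
              · rcases ht' with rfl | ht'M
                · exact absurd rfl hne
                · exact ⟨t', ht'M, by rw [Finset.inter_comm] at hne'; exact hne'.ne_empty⟩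
              · rcases ht' with rfl | ht'M
                · exact ⟨s, hsM, hne'.ne_empty⟩
                · exact absurd (hM'.2 s hsM t' ht'M hne) hne'.ne_empty
            obtain ⟨s, hsM, hst⟩ := key
            obtain ⟨y, hy⟩ := Finset.nonempty_iff_ne_empty.mpr hst
            rw [Finset.mem_inter] at hy
            refine Set.mem_biUnion ?_ ⟨ht, hy.2⟩
            exact Set.mem_biUnion hsM hy.1
        exact ((hMu.union (hE.biUnion fun x _ => hx x)).mono hsub)
      · exact ⟨∅, M, hM.1.1, hMu, hM.1.2⟩

lemma delta_system' {X : Type*} [DecidableEq X] (𝒞 : Set (Finset X)) (hu : ¬𝒞.Countable) :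
    ∃ R : Finset X, ∃ 𝒟 ⊆ 𝒞, ¬𝒟.Countable ∧
      ∀ s ∈ 𝒟, ∀ t ∈ 𝒟, s ≠ t → s ∩ t = R := by
  obtain ⟨n, hn⟩ := pigeonC' hu Finset.card
  obtain ⟨R, 𝒟, hsub, hDu, hD⟩ := delta_system_card' n _ hn (fun s hs => hs.2)
  exact ⟨R, 𝒟, fun s hs => (hsub hs).1, hDu, hD⟩

lemma eqStar_union' {A B C D : Set ℕ} (h1 : eqStar A B) (h2 : eqStar C D) :
    eqStar (A ∪ C) (B ∪ D) := by
  refine (h1.union h2).subset ?_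
  intro x hx
  simp only [Set.mem_symmDiff, Set.mem_union] at hx ⊢
  tauto

lemma finite_subset_Iio {s : Set ℕ} (hs : s.Finite) : ∃ m : ℕ, s ⊆ Set.Iio m := by
  obtain ⟨M, hM⟩ := hs.bddAbove
  exact ⟨M + 1, fun x hx => Nat.lt_succ_of_le (hM hx)⟩

end Aux


/-- if `ℙ_𝒜` has an uncountable antichain then `𝒜` contains an `n`-Luzin
gap for some `n`. -/
theorem statement7 (𝒜 : Set (Set ℕ)) (h𝒜 : ADFamily 𝒜)
    (h : ∃ P : Set (Set ℕ × Set ℕ), SplitAntichain 𝒜 P ∧ ¬P.Countable) :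
    ∃ n : ℕ, ContainsNLuzinGap 𝒜 n := by
  classical
  obtain ⟨P, hPA, hPu⟩ := h
  -- choose representations
  have hrepE : ∀ p : Set ℕ × Set ℕ, ∃ ab : Finset (Set ℕ) × Finset (Set ℕ),
      p ∈ P → Represents 𝒜 p ab.1 ab.2 := by
    intro p
    by_cases hp : p ∈ P
    · obtain ⟨aa, bb, habb⟩ := (hPA.1 p hp).2
      exact ⟨(aa, bb), fun _ => habb⟩
    · exact ⟨(∅, ∅), fun hmem => absurd hmem hp⟩
  choose ab hab using hrepE
  set a : (Set ℕ × Set ℕ) → Finset (Set ℕ) := fun p => (ab p).1 with ha_def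
  set b : (Set ℕ × Set ℕ) → Finset (Set ℕ) := fun p => (ab p).2 with hb_def
  set c : (Set ℕ × Set ℕ) → Finset (Set ℕ) := fun p => a p ∪ b p with hc_def
  set U : (Set ℕ × Set ℕ) → Set ℕ := fun p => ⋃ A ∈ a p, A with hU_def
  set V : (Set ℕ × Set ℕ) → Set ℕ := fun p => ⋃ B ∈ b p, B with hV_def
  have hdisj : ∀ p ∈ P, p.1 ∩ p.2 = ∅ := fun p hp => (hPA.1 p hp).1
  have hdis' : ∀ p ∈ P, ∀ x : ℕ, x ∈ p.1 → x ∈ p.2 → False := by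
    intro p hp x h1 h2
    have := hdisj p hp
    rw [Set.eq_empty_iff_forall_notMem] at this
    exact this x ⟨h1, h2⟩
  have haA : ∀ p ∈ P, ↑(a p) ⊆ 𝒜 := fun p hp => (hab p hp).1
  have hbA : ∀ p ∈ P, ↑(b p) ⊆ 𝒜 := fun p hp => (hab p hp).2.1
  have hcA : ∀ p ∈ P, ∀ C ∈ c p, C ∈ 𝒜 := by
    intro p hp C hC
    rcases Finset.mem_union.mp hC with hh | hh
    · exact haA p hp hh
    · exact hbA p hp hh
  have he1 : ∀ p ∈ P, eqStar p.1 (U p) := fun p hp => (hab p hp).2.2.1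
  have he2 : ∀ p ∈ P, eqStar p.2 (V p) := fun p hp => (hab p hp).2.2.2
  -- incompatibility produces a witness
  have hwit : ∀ p ∈ P, ∀ q ∈ P, p ≠ q →
      ∃ x, (x ∈ p.1 ∧ x ∈ q.2) ∨ (x ∈ q.1 ∧ x ∈ p.2) := by
    intro p hp q hq hne
    by_contra hno
    push_neg at hno
    apply hPA.2 p hp q hq hne
    refine ⟨(p.1 ∪ q.1, p.2 ∪ q.2), ⟨?_, a p ∪ a q, b p ∪ b q, ?_, ?_, ?_, ?_⟩,
      ⟨Set.subset_union_left, Set.subset_union_left⟩,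
      ⟨Set.subset_union_right, Set.subset_union_right⟩⟩
    · ext x
      simp only [Set.mem_inter_iff, Set.mem_union, Set.mem_empty_iff_false, iff_false, not_and]
      rintro (h1 | h1) (h2 | h2)
      · exact hdis' p hp x h1 h2
      · exact (hno x).1 h1 h2
      · exact (hno x).2 h1 h2
      · exact hdis' q hq x h1 h2
    · rw [Finset.coe_union]
      exact Set.union_subset (haA p hp) (haA q hq)
    · rw [Finset.coe_union]
      exact Set.union_subset (hbA p hp) (hbA q hq)
    · show eqStar (p.1 ∪ q.1) (⋃ A ∈ a p ∪ a q, A)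
      rw [Finset.set_biUnion_union]
      exact eqStar_union' (he1 p hp) (he1 q hq)
    · show eqStar (p.2 ∪ q.2) (⋃ B ∈ b p ∪ b q, B)
      rw [Finset.set_biUnion_union]
      exact eqStar_union' (he2 p hp) (he2 q hq)
  -- a uniform bound for each condition
  have hbndE : ∀ p : Set ℕ × Set ℕ, ∃ mm : ℕ, p ∈ P →
      symmDiff p.1 (U p) ∪ symmDiff p.2 (V p) ∪
        (⋃ C ∈ (↑(c p) : Set (Set ℕ)), ⋃ C' ∈ (↑(c p) : Set (Set ℕ)) \ {C}, C ∩ C')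
        ⊆ Set.Iio mm := by
    intro p
    by_cases hp : p ∈ P
    · have hfin : (symmDiff p.1 (U p) ∪ symmDiff p.2 (V p) ∪
          (⋃ C ∈ (↑(c p) : Set (Set ℕ)), ⋃ C' ∈ (↑(c p) : Set (Set ℕ)) \ {C}, C ∩ C')).Finite := by
        refine (((he1 p hp).union (he2 p hp)).union ?_)
        refine Set.Finite.biUnion (c p).finite_toSet (fun C hC => ?_)
        refine Set.Finite.biUnion ((c p).finite_toSet.subset Set.diff_subset) (fun C' hC' => ?_)
        refine h𝒜.2.2 C (hcA p hp C (Finset.mem_coe.mp hC)) C'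
          (hcA p hp C' (Finset.mem_coe.mp hC'.1)) ?_
        exact fun hEq => hC'.2 (by simp [hEq])
      obtain ⟨mm, hmm⟩ := finite_subset_Iio hfin
      exact ⟨mm, fun _ => hmm⟩
    · exact ⟨0, fun hmem => absurd hmem hp⟩
  choose m₁ hm₁ using hbndE
  -- pigeonhole: constant bound m
  obtain ⟨m, hS1u⟩ := pigeonC' hPu m₁
  set S₁ : Set (Set ℕ × Set ℕ) := P ∩ m₁ ⁻¹' {m} with hS1_def
  -- pigeonhole: constant trace below m
  set tr : (Set ℕ × Set ℕ) → Finset ℕ × Finset ℕ := fun p =>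
    ((Finset.range m).filter (· ∈ p.1), (Finset.range m).filter (· ∈ p.2)) with htr_def
  obtain ⟨FG, hS2u⟩ := pigeonC' hS1u tr
  set S₂ : Set (Set ℕ × Set ℕ) := S₁ ∩ tr ⁻¹' {FG} with hS2_def
  have hS2P : ∀ p ∈ S₂, p ∈ P := fun p hp => hp.1.1
  have hS2m : ∀ p ∈ S₂, m₁ p = m := fun p hp => hp.1.2
  have htrc : ∀ p ∈ S₂, ∀ q ∈ S₂, ∀ x : ℕ, x < m →
      ((x ∈ p.1 ↔ x ∈ q.1) ∧ (x ∈ p.2 ↔ x ∈ q.2)) := by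
    intro p hp q hq x hx
    have h1 : tr p = tr q := by
      have e1 : tr p = FG := hp.2
      have e2 : tr q = FG := hq.2
      rw [e1, e2]
    have h2 : (Finset.range m).filter (· ∈ p.1) = (Finset.range m).filter (· ∈ q.1) :=
      congrArg Prod.fst h1
    have h3 : (Finset.range m).filter (· ∈ p.2) = (Finset.range m).filter (· ∈ q.2) :=
      congrArg Prod.snd h1
    constructor
    · constructor
      · intro hmem
        have : x ∈ (Finset.range m).filter (· ∈ p.1) :=
          Finset.mem_filter.mpr ⟨Finset.mem_range.mpr hx, hmem⟩
        rw [h2] at this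
        exact (Finset.mem_filter.mp this).2
      · intro hmem
        have : x ∈ (Finset.range m).filter (· ∈ q.1) :=
          Finset.mem_filter.mpr ⟨Finset.mem_range.mpr hx, hmem⟩
        rw [← h2] at this
        exact (Finset.mem_filter.mp this).2
    · constructor
      · intro hmem
        have : x ∈ (Finset.range m).filter (· ∈ p.2) :=
          Finset.mem_filter.mpr ⟨Finset.mem_range.mpr hx, hmem⟩
        rw [h3] at this
        exact (Finset.mem_filter.mp this).2
      · intro hmem
        have : x ∈ (Finset.range m).filter (· ∈ q.2) :=
          Finset.mem_filter.mpr ⟨Finset.mem_range.mpr hx, hmem⟩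
        rw [← h3] at this
        exact (Finset.mem_filter.mp this).2
  -- fibers of c on S₂ are countable
  have hfib : ∀ v : Finset (Set ℕ), (S₂ ∩ c ⁻¹' {v}).Countable := by
    intro v
    have hTcnt : ∀ w : Finset (Set ℕ) × Finset (Set ℕ),
        {p | p ∈ S₂ ∩ c ⁻¹' {v} ∧ a p = w.1 ∧ b p = w.2}.Countable := by
      intro w
      rw [Set.countable_iff_exists_injOn]
      refine ⟨fun p => Encodable.encode
        (((Finset.range m).filter (· ∈ symmDiff p.1 (U p))),
         ((Finset.range m).filter (· ∈ symmDiff p.2 (V p)))), ?_⟩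
      intro p hp q hq hEq
      have hEq' := Encodable.encode_injective hEq
      have hd1 : (Finset.range m).filter (· ∈ symmDiff p.1 (U p)) =
          (Finset.range m).filter (· ∈ symmDiff q.1 (U q)) := congrArg Prod.fst hEq'
      have hd2 : (Finset.range m).filter (· ∈ symmDiff p.2 (V p)) =
          (Finset.range m).filter (· ∈ symmDiff q.2 (V q)) := congrArg Prod.snd hEq'
      have hpP : p ∈ P := hS2P p hp.1.1
      have hqP : q ∈ P := hS2P q hq.1.1
      have hbp : symmDiff p.1 (U p) ∪ symmDiff p.2 (V p) ⊆ Set.Iio m := by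
        have hB := hm₁ p hpP
        rw [hS2m p hp.1.1] at hB
        exact fun y hy => hB (Set.mem_union_left _ hy)
      have hbq : symmDiff q.1 (U q) ∪ symmDiff q.2 (V q) ⊆ Set.Iio m := by
        have hB := hm₁ q hqP
        rw [hS2m q hq.1.1] at hB
        exact fun y hy => hB (Set.mem_union_left _ hy)
      have hset1 : symmDiff p.1 (U p) = symmDiff q.1 (U q) := by
        ext x
        constructor
        · intro hx
          have hxm : x < m := hbp (Set.mem_union_left _ hx)
          have : x ∈ (Finset.range m).filter (· ∈ symmDiff p.1 (U p)) :=
            Finset.mem_filter.mpr ⟨Finset.mem_range.mpr hxm, hx⟩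
          rw [hd1] at this
          exact (Finset.mem_filter.mp this).2
        · intro hx
          have hxm : x < m := hbq (Set.mem_union_left _ hx)
          have : x ∈ (Finset.range m).filter (· ∈ symmDiff q.1 (U q)) :=
            Finset.mem_filter.mpr ⟨Finset.mem_range.mpr hxm, hx⟩
          rw [← hd1] at this
          exact (Finset.mem_filter.mp this).2
      have hset2 : symmDiff p.2 (V p) = symmDiff q.2 (V q) := by
        ext x
        constructor
        · intro hx
          have hxm : x < m := hbp (Set.mem_union_right _ hx)
          have : x ∈ (Finset.range m).filter (· ∈ symmDiff p.2 (V p)) :=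
            Finset.mem_filter.mpr ⟨Finset.mem_range.mpr hxm, hx⟩
          rw [hd2] at this
          exact (Finset.mem_filter.mp this).2
        · intro hx
          have hxm : x < m := hbq (Set.mem_union_right _ hx)
          have : x ∈ (Finset.range m).filter (· ∈ symmDiff q.2 (V q)) :=
            Finset.mem_filter.mpr ⟨Finset.mem_range.mpr hxm, hx⟩
          rw [← hd2] at this
          exact (Finset.mem_filter.mp this).2
      have hUpq : U p = U q := by
        show (⋃ A ∈ a p, A) = ⋃ A ∈ a q, A
        rw [hp.2.1, hq.2.1]
      have hVpq : V p = V q := by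
        show (⋃ B ∈ b p, B) = ⋃ B ∈ b q, B
        rw [hp.2.2, hq.2.2]
      have hfst : p.1 = q.1 := by
        have ep : p.1 = symmDiff (U p) (symmDiff p.1 (U p)) := by
          rw [symmDiff_comm p.1 (U p), symmDiff_symmDiff_cancel_left]
        have eq' : q.1 = symmDiff (U q) (symmDiff q.1 (U q)) := by
          rw [symmDiff_comm q.1 (U q), symmDiff_symmDiff_cancel_left]
        rw [ep, eq', hset1, hUpq]
      have hsnd : p.2 = q.2 := by
        have ep : p.2 = symmDiff (V p) (symmDiff p.2 (V p)) := by
          rw [symmDiff_comm p.2 (V p), symmDiff_symmDiff_cancel_left]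
        have eq' : q.2 = symmDiff (V q) (symmDiff q.2 (V q)) := by
          rw [symmDiff_comm q.2 (V q), symmDiff_symmDiff_cancel_left]
        rw [ep, eq', hset2, hVpq]
      exact Prod.ext hfst hsnd
    have hsub : S₂ ∩ c ⁻¹' {v} ⊆
        ⋃ w ∈ (↑(v.powerset ×ˢ v.powerset) : Set (Finset (Set ℕ) × Finset (Set ℕ))),
          {p | p ∈ S₂ ∩ c ⁻¹' {v} ∧ a p = w.1 ∧ b p = w.2} := by
      intro p hp
      have hcv : c p = v := hp.2
      refine Set.mem_biUnion ?_ ⟨hp, rfl, rfl⟩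
      simp only [Finset.coe_product, Finset.mem_coe, Finset.mem_product, Finset.mem_powerset,
        Set.mem_prod]
      constructor
      · rw [← hcv]; exact Finset.subset_union_left
      · rw [← hcv]; exact Finset.subset_union_right
    exact (Set.Countable.biUnion ((v.powerset ×ˢ v.powerset).finite_toSet.countable)
      (fun w _ => hTcnt w)).mono hsub
  -- the image family is uncountable
  have hCu : ¬(c '' S₂).Countable := by
    intro hC
    apply hS2u
    have hsub : S₂ ⊆ ⋃ v ∈ c '' S₂, (S₂ ∩ c ⁻¹' {v}) := fun p hp =>
      Set.mem_biUnion ⟨p, hp, rfl⟩ ⟨hp, rfl⟩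
    exact (hC.biUnion fun v _ => hfib v).mono hsub
  -- Δ-system
  obtain ⟨R, 𝒟, hDsub, hDu, hD⟩ := delta_system' _ hCu
  have hselE : ∀ v : Finset (Set ℕ), ∃ p : Set ℕ × Set ℕ, v ∈ 𝒟 → p ∈ S₂ ∧ c p = v := by
    intro v
    by_cases hv : v ∈ 𝒟
    · obtain ⟨p, hp, hcp⟩ := hDsub hv
      exact ⟨p, fun _ => ⟨hp, hcp⟩⟩
    · exact ⟨(∅, ∅), fun hmem => absurd hmem hv⟩
  choose sel hsel using hselE
  set S₄ : Set (Set ℕ × Set ℕ) := sel '' 𝒟 with hS4_def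
  have hS4sub : S₄ ⊆ S₂ := by
    rintro p ⟨v, hv, rfl⟩
    exact (hsel v hv).1
  have hS4u : ¬S₄.Countable := by
    intro hS4
    apply hDu
    have hsub : 𝒟 ⊆ c '' S₄ := fun v hv => ⟨sel v, ⟨v, hv, rfl⟩, (hsel v hv).2⟩
    exact ((hS4.image c).mono hsub)
  have hΔ : ∀ p ∈ S₄, ∀ q ∈ S₄, p ≠ q → c p ∩ c q = R := by
    rintro p ⟨v, hv, rfl⟩ q ⟨v', hv', rfl⟩ hne
    have hvv' : v ≠ v' := fun hEq => hne (by rw [hEq])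
    rw [(hsel v hv).2, (hsel v' hv').2]
    exact hD v hv v' hv' hvv'
  have hRsub : ∀ p ∈ S₄, R ⊆ c p := by
    intro p hp
    have hex : ∃ q ∈ S₄, q ≠ p := by
      by_contra hq
      push_neg at hq
      exact hS4u ((Set.countable_singleton p).mono fun q hqS => hq q hqS)
    obtain ⟨q, hq, hqp⟩ := hex
    rw [← hΔ p hp q hq (Ne.symm hqp)]
    exact Finset.inter_subset_left
  -- pigeonhole: sides of the root
  have himg : ((fun p => R.filter (· ∈ a p)) '' S₄).Countable := by
    refine (R.powerset.finite_toSet.countable).mono ?_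
    rintro wv ⟨p, _, rfl⟩
    simp only [Finset.coe_powerset, Set.mem_preimage, Set.mem_powerset_iff, Finset.coe_subset]
    exact Finset.filter_subset _ _
  obtain ⟨RA, hS5u⟩ := pigeon' hS4u (fun p => R.filter (· ∈ a p)) himg
  set S₅ : Set (Set ℕ × Set ℕ) := S₄ ∩ (fun p => R.filter (· ∈ a p)) ⁻¹' {RA} with hS5_def
  have hside : ∀ p ∈ S₅, ∀ C ∈ R, (C ∈ a p ↔ C ∈ RA) := by
    intro p hp C hC
    have h1 : R.filter (· ∈ a p) = RA := hp.2
    constructor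
    · intro hCa
      rw [← h1]
      exact Finset.mem_filter.mpr ⟨hC, hCa⟩
    · intro hCRA
      rw [← h1] at hCRA
      exact (Finset.mem_filter.mp hCRA).2
  -- pigeonhole: sizes
  obtain ⟨st, hS6u⟩ := pigeonC' hS5u (fun p => ((a p \ R).card, (b p \ R).card))
  set s' : ℕ := st.1 with hs'_def
  set t' : ℕ := st.2 with ht'_def
  set S₆ : Set (Set ℕ × Set ℕ) :=
    S₅ ∩ (fun p => ((a p \ R).card, (b p \ R).card)) ⁻¹' {st} with hS6_def
  have hS6S5 : ∀ p ∈ S₆, p ∈ S₅ := fun p hp => hp.1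
  have hS6S4 : ∀ p ∈ S₆, p ∈ S₄ := fun p hp => hp.1.1
  have hS6S2 : ∀ p ∈ S₆, p ∈ S₂ := fun p hp => hS4sub hp.1.1
  have hS6P : ∀ p ∈ S₆, p ∈ P := fun p hp => hS2P p (hS6S2 p hp)
  have hS6m : ∀ p ∈ S₆, m₁ p = m := fun p hp => hS2m p (hS6S2 p hp)
  have hsz : ∀ p ∈ S₆, (a p \ R).card = s' ∧ (b p \ R).card = t' := by
    intro p hp
    have h1 : ((a p \ R).card, (b p \ R).card) = st := hp.2
    exact ⟨congrArg Prod.fst h1, congrArg Prod.snd h1⟩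
  -- bounds on S₆
  have hbnds : ∀ p ∈ S₆, symmDiff p.1 (U p) ⊆ Set.Iio m ∧ symmDiff p.2 (V p) ⊆ Set.Iio m ∧
      (∀ C ∈ c p, ∀ C' ∈ c p, C ≠ C' → C ∩ C' ⊆ Set.Iio m) := by
    intro p hp
    have hB := hm₁ p (hS6P p hp)
    rw [hS6m p hp] at hB
    refine ⟨fun y hy => hB (Set.mem_union_left _ (Set.mem_union_left _ hy)),
            fun y hy => hB (Set.mem_union_left _ (Set.mem_union_right _ hy)), ?_⟩
    intro C hC C' hC' hne y hy
    refine hB (Set.mem_union_right _ ?_)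
    refine Set.mem_iUnion₂.mpr ⟨C, Finset.mem_coe.mpr hC, ?_⟩
    exact Set.mem_iUnion₂.mpr ⟨C', ⟨Finset.mem_coe.mpr hC', by simp [Ne.symm hne]⟩, hy⟩
  -- a and b parts disjoint
  have habd : ∀ p ∈ P, ∀ C : Set ℕ, C ∈ a p → C ∈ b p → False := by
    intro p hp C hCa hCb
    have hC𝒜 : C ∈ 𝒜 := haA p hp hCa
    apply h𝒜.2.1 C hC𝒜
    have hsub : C ⊆ (symmDiff p.1 (U p)) ∪ (symmDiff p.2 (V p)) := by
      intro x hx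
      have hxU : x ∈ U p := Set.mem_iUnion₂.mpr ⟨C, hCa, hx⟩
      have hxV : x ∈ V p := Set.mem_iUnion₂.mpr ⟨C, hCb, hx⟩
      by_cases h1 : x ∈ p.1
      · by_cases h2 : x ∈ p.2
        · exact absurd (hdis' p hp x h1 h2) (fun hF => hF)
        · exact Or.inr (Set.mem_symmDiff.mpr (Or.inr ⟨hxV, h2⟩))
      · exact Or.inl (Set.mem_symmDiff.mpr (Or.inr ⟨hxU, h1⟩))
    exact ((he1 p hp).union (he2 p hp)).subset hsub
  -- no collisions between non-root parts
  have hcross : ∀ p ∈ S₆, ∀ q ∈ S₆, ∀ C : Set ℕ, C ∈ a p \ R → C ∈ b q \ R → False := by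
    intro p hp q hq C hCp hCq
    rw [Finset.mem_sdiff] at hCp hCq
    by_cases hpq : p = q
    · subst hpq
      exact habd p (hS6P p hp) C hCp.1 hCq.1
    · have hmem : C ∈ c p ∩ c q :=
        Finset.mem_inter.mpr ⟨Finset.mem_union_left _ hCp.1, Finset.mem_union_right _ hCq.1⟩
      rw [hΔ p (hS6S4 p hp) q (hS6S4 q hq) hpq] at hmem
      exact hCp.2 hmem
  have haa : ∀ p ∈ S₆, ∀ q ∈ S₆, p ≠ q → ∀ C : Set ℕ, C ∈ a p \ R → C ∈ a q \ R → False := by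
    intro p hp q hq hpq C hCp hCq
    rw [Finset.mem_sdiff] at hCp hCq
    have hmem : C ∈ c p ∩ c q :=
      Finset.mem_inter.mpr ⟨Finset.mem_union_left _ hCp.1, Finset.mem_union_left _ hCq.1⟩
    rw [hΔ p (hS6S4 p hp) q (hS6S4 q hq) hpq] at hmem
    exact hCp.2 hmem
  have hbb : ∀ p ∈ S₆, ∀ q ∈ S₆, p ≠ q → ∀ C : Set ℕ, C ∈ b p \ R → C ∈ b q \ R → False := by
    intro p hp q hq hpq C hCp hCq
    rw [Finset.mem_sdiff] at hCp hCq
    have hmem : C ∈ c p ∩ c q :=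
      Finset.mem_inter.mpr ⟨Finset.mem_union_right _ hCp.1, Finset.mem_union_right _ hCq.1⟩
    rw [hΔ p (hS6S4 p hp) q (hS6S4 q hq) hpq] at hmem
    exact hCp.2 hmem
  -- core witness structure
  have hW4 : ∀ p ∈ S₆, ∀ q ∈ S₆, ∀ x : ℕ, x ∈ p.1 → x ∈ q.2 →
      ¬ x < m ∧ ∃ C ∈ a p \ R, ∃ D ∈ b q \ R, x ∈ C ∧ x ∈ D := by
    intro p hp q hq x hx1 hx2
    have hpP := hS6P p hp
    have hqP := hS6P q hq
    have hxm : ¬ x < m := by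
      intro hxm
      have hxq1 : x ∈ q.1 := (htrc p (hS6S2 p hp) q (hS6S2 q hq) x hxm).1.mp hx1
      exact hdis' q hqP x hxq1 hx2
    have hbp := hbnds p hp
    have hbq := hbnds q hq
    have hxU : x ∈ U p := by
      by_contra hc'
      exact hxm (hbp.1 (Set.mem_symmDiff.mpr (Or.inl ⟨hx1, hc'⟩)))
    obtain ⟨C, hCa, hxC⟩ := Set.mem_iUnion₂.mp hxU
    have hCR : C ∉ R := by
      intro hCR
      have hCRA := (hside p (hS6S5 p hp) C hCR).mp hCa
      have hCaq := (hside q (hS6S5 q hq) C hCR).mpr hCRA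
      have hxUq : x ∈ U q := Set.mem_iUnion₂.mpr ⟨C, hCaq, hxC⟩
      have hxq1 : x ∈ q.1 := by
        by_contra hc'
        exact hxm (hbq.1 (Set.mem_symmDiff.mpr (Or.inr ⟨hxUq, hc'⟩)))
      exact hdis' q hqP x hxq1 hx2
    have hxV : x ∈ V q := by
      by_contra hc'
      exact hxm (hbq.2.1 (Set.mem_symmDiff.mpr (Or.inl ⟨hx2, hc'⟩)))
    obtain ⟨D, hDb, hxD⟩ := Set.mem_iUnion₂.mp hxV
    have hDR : D ∉ R := by
      intro hDR
      have hDnaq : D ∉ a q := fun hh => habd q hqP D hh hDb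
      have hDRA : D ∉ RA := fun hh => hDnaq ((hside q (hS6S5 q hq) D hDR).mpr hh)
      have hDnap : D ∉ a p := fun hh => hDRA ((hside p (hS6S5 p hp) D hDR).mp hh)
      have hDbp : D ∈ b p := by
        have hDcp : D ∈ c p := hRsub p (hS6S4 p hp) hDR
        rcases Finset.mem_union.mp hDcp with hh | hh
        · exact absurd hh hDnap
        · exact hh
      have hxVp : x ∈ V p := Set.mem_iUnion₂.mpr ⟨D, hDbp, hxD⟩
      have hxp2 : x ∈ p.2 := by
        by_contra hc'
        exact hxm (hbp.2.1 (Set.mem_symmDiff.mpr (Or.inr ⟨hxVp, hc'⟩)))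
      exact hdis' p hpP x hx1 hxp2
    exact ⟨hxm, C, Finset.mem_sdiff.mpr ⟨hCa, hCR⟩, D, Finset.mem_sdiff.mpr ⟨hDb, hDR⟩, hxC, hxD⟩
  -- enumerations
  have henumA : ∀ p : Set ℕ × Set ℕ, ∃ u : Fin s' → Set ℕ, p ∈ S₆ →
      (∀ i, u i ∈ a p \ R) ∧ (∀ C ∈ a p \ R, ∃ i, u i = C) ∧ Function.Injective u := by
    intro p
    by_cases hp : p ∈ S₆
    · have hcard : (a p \ R).card = s' := (hsz p hp).1
      let e := Finset.equivFinOfCardEq hcard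
      refine ⟨fun i => (e.symm i : Set ℕ), fun _ => ⟨?_, ?_, ?_⟩⟩
      · intro i
        exact (e.symm i).2
      · intro C hC
        exact ⟨e ⟨C, hC⟩, by simp⟩
      · intro i j hij
        have h1 : e.symm i = e.symm j := Subtype.ext hij
        simpa using congrArg e h1
    · exact ⟨fun _ => ∅, fun hh => absurd hh hp⟩
  choose u hu using henumA
  have henumB : ∀ p : Set ℕ × Set ℕ, ∃ v : Fin t' → Set ℕ, p ∈ S₆ →
      (∀ i, v i ∈ b p \ R) ∧ (∀ C ∈ b p \ R, ∃ i, v i = C) ∧ Function.Injective v := by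
    intro p
    by_cases hp : p ∈ S₆
    · have hcard : (b p \ R).card = t' := (hsz p hp).2
      let e := Finset.equivFinOfCardEq hcard
      refine ⟨fun i => (e.symm i : Set ℕ), fun _ => ⟨?_, ?_, ?_⟩⟩
      · intro i
        exact (e.symm i).2
      · intro C hC
        exact ⟨e ⟨C, hC⟩, by simp⟩
      · intro i j hij
        have h1 : e.symm i = e.symm j := Subtype.ext hij
        simpa using congrArg e h1
    · exact ⟨fun _ => ∅, fun hh => absurd hh hp⟩
  choose v hv using henumB
  set w : (Set ℕ × Set ℕ) → Fin (s' + t') → Set ℕ := fun p i =>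
    if h : (i : ℕ) < s' then u p ⟨i, h⟩ else v p ⟨(i : ℕ) - s', by omega⟩ with hw_def
  have hwa : ∀ p, ∀ i : Fin (s' + t'), ∀ h : (i : ℕ) < s', w p i = u p ⟨(i : ℕ), h⟩ := by
    intro p i h
    simp only [hw_def]
    rw [dif_pos h]
  have hwb : ∀ p, ∀ i : Fin (s' + t'), ∀ h : ¬ (i : ℕ) < s',
      w p i = v p ⟨(i : ℕ) - s', by omega⟩ := by
    intro p i h
    simp only [hw_def]
    rw [dif_neg h]
  have hwa' : ∀ p, ∀ k : Fin s', ∀ i : Fin (s' + t'), (i : ℕ) = (k : ℕ) → w p i = u p k := by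
    intro p k i hik
    have hk := k.isLt
    have hlt : (i : ℕ) < s' := by omega
    rw [hwa p i hlt]
    exact congrArg (u p) (Fin.ext hik)
  have hwb' : ∀ p, ∀ k : Fin t', ∀ i : Fin (s' + t'), (i : ℕ) = s' + (k : ℕ) → w p i = v p k := by
    intro p k i hik
    have hk := k.isLt
    have hlt : ¬ (i : ℕ) < s' := by omega
    rw [hwb p i hlt]
    exact congrArg (v p) (Fin.ext (show (i : ℕ) - s' = (k : ℕ) by omega))
  have hwc : ∀ p ∈ S₆, ∀ i : Fin (s' + t'), w p i ∈ c p := by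
    intro p hp i
    by_cases h : (i : ℕ) < s'
    · rw [hwa p i h]
      exact Finset.mem_union_left _ (Finset.mem_sdiff.mp ((hu p hp).1 ⟨(i : ℕ), h⟩)).1
    · rw [hwb p i h]
      exact Finset.mem_union_right _ (Finset.mem_sdiff.mp ((hv p hp).1 _)).1
  have hwmem : ∀ p ∈ S₆, ∀ i : Fin (s' + t'), w p i ∈ 𝒜 := by
    intro p hp i
    exact hcA p (hS6P p hp) _ (hwc p hp i)
  have hwne : ∀ p ∈ S₆, ∀ q ∈ S₆, ∀ i j : Fin (s' + t'), (i ≠ j ∨ p ≠ q) →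
      w p i ≠ w q j := by
    intro p hp q hq i j hij hEq
    by_cases hi : (i : ℕ) < s' <;> by_cases hj : (j : ℕ) < s'
    · rw [hwa p i hi, hwa q j hj] at hEq
      have hup := (hu p hp).1 ⟨(i : ℕ), hi⟩
      have huq := (hu q hq).1 ⟨(j : ℕ), hj⟩
      by_cases hpq : p = q
      · subst hpq
        rcases hij with hij | hij
        · have h1 : (⟨(i : ℕ), hi⟩ : Fin s') = ⟨(j : ℕ), hj⟩ := (hu p hp).2.2 hEq
          have h2 : (i : ℕ) = (j : ℕ) := congrArg (fun z : Fin s' => (z : ℕ)) h1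
          exact hij (Fin.ext h2)
        · exact hij rfl
      · exact haa p hp q hq hpq _ hup (hEq ▸ huq)
    · rw [hwa p i hi, hwb q j hj] at hEq
      exact hcross p hp q hq _ ((hu p hp).1 ⟨(i : ℕ), hi⟩) (hEq ▸ (hv q hq).1 _)
    · rw [hwb p i hi, hwa q j hj] at hEq
      exact hcross q hq p hp _ ((hu q hq).1 ⟨(j : ℕ), hj⟩) (hEq.symm ▸ (hv p hp).1 _)
    · rw [hwb p i hi, hwb q j hj] at hEq
      have hvp := (hv p hp).1 (⟨(i : ℕ) - s', by omega⟩ : Fin t')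
      have hvq := (hv q hq).1 (⟨(j : ℕ) - s', by omega⟩ : Fin t')
      by_cases hpq : p = q
      · subst hpq
        rcases hij with hij | hij
        · have h1 : (⟨(i : ℕ) - s', by omega⟩ : Fin t') = ⟨(j : ℕ) - s', by omega⟩ :=
            (hv p hp).2.2 hEq
          have h2 : (i : ℕ) - s' = (j : ℕ) - s' := congrArg Fin.val h1
          exact hij (Fin.ext (by omega))
        · exact hij rfl
      · exact hbb p hp q hq hpq _ hvp (hEq ▸ hvq)
  have hw1 : ∀ p ∈ S₆, ∀ i j : Fin (s' + t'), i ≠ j → w p i ∩ w p j ⊆ Set.Iio m := by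
    intro p hp i j hij
    exact (hbnds p hp).2.2 _ (hwc p hp i) _ (hwc p hp j) (hwne p hp p hp i j (Or.inl hij))
  -- ω₁-indexing of S₆
  have hgex : ∃ g : Ordinal.{0} → Set ℕ × Set ℕ, (∀ ξ < omega1, g ξ ∈ S₆) ∧
      (∀ ξ < omega1, ∀ η < omega1, ξ ≠ η → g ξ ≠ g η) := by
    have h1 : (Cardinal.aleph 1 : Cardinal.{0}) ≤ #S₆ := by
      rw [countable_iff_lt_aleph_one] at hS6u
      exact le_of_not_gt hS6u
    have h2 : #(Set.Iio omega1) = Cardinal.lift.{1,0} (Cardinal.aleph 1) := by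
      rw [Ordinal.mk_Iio_ordinal]
      simp [omega1, Cardinal.card_ord]
    have h3 : Cardinal.lift.{0,1} #(↥(Set.Iio omega1)) ≤ Cardinal.lift.{1,0} #↥S₆ := by
      rw [h2, Cardinal.lift_lift]
      exact Cardinal.lift_le.mpr h1
    obtain ⟨f⟩ := Cardinal.lift_mk_le'.mp h3
    refine ⟨fun ξ => if h : ξ < omega1 then (f ⟨ξ, h⟩ : Set ℕ × Set ℕ) else (∅, ∅), ?_, ?_⟩
    · intro ξ hξ
      simp only []
      rw [dif_pos hξ]
      exact (f ⟨ξ, hξ⟩).2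
    · intro ξ hξ η hη hne
      simp only []
      rw [dif_pos hξ, dif_pos hη]
      intro hEq
      apply hne
      exact congrArg Subtype.val (f.injective (Subtype.ext hEq))
  obtain ⟨g, hg1, hg2⟩ := hgex
  -- assemble the n-Luzin gap
  refine ⟨s' + t', fun i ξ => w (g ξ) i, ?_, ?_, ?_, m, ?_, ?_⟩
  · intro i α hα
    exact hwmem (g α) (hg1 α hα) i
  · intro i α hα β hβ hne
    exact hwne (g α) (hg1 α hα) (g β) (hg1 β hβ) i i (Or.inr (hg2 α hα β hβ hne))
  · intro i j hij α hα β hβ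
    exact hwne (g α) (hg1 α hα) (g β) (hg1 β hβ) i j (Or.inl hij)
  · intro i j hij α hα
    exact hw1 (g α) (hg1 α hα) i j (Fin.ne_of_lt hij)
  · intro α hα β hβ hne hsub
    have hpS := hg1 α hα
    have hqS := hg1 β hβ
    have hne' : g α ≠ g β := hg2 α hα β hβ hne
    obtain ⟨x, hx⟩ := hwit (g α) (hS6P _ hpS) (g β) (hS6P _ hqS) hne'
    rcases hx with ⟨hx1, hx2⟩ | ⟨hx1, hx2⟩
    · obtain ⟨hxm, C, hC, D, hD, hxC, hxD⟩ := hW4 (g α) hpS (g β) hqS x hx1 hx2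
      obtain ⟨i0, hi0⟩ := (hu (g α) hpS).2.1 C hC
      obtain ⟨j0, hj0⟩ := (hv (g β) hqS).2.1 D hD
      have hIlt : (i0 : ℕ) < s' + t' := by omega
      have hJlt : s' + (j0 : ℕ) < s' + t' := by omega
      apply hxm
      refine hsub (Set.mem_iUnion.mpr ⟨⟨(i0 : ℕ), hIlt⟩, Set.mem_iUnion.mpr ⟨⟨s' + (j0 : ℕ), hJlt⟩,
        Set.mem_iUnion.mpr ⟨?_, ?_, ?_⟩⟩⟩)
      · intro hEq
        have hv2 : (i0 : ℕ) = s' + (j0 : ℕ) := congrArg Fin.val hEq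
        have hv3 := i0.isLt
        omega
      · show x ∈ w (g α) ⟨(i0 : ℕ), hIlt⟩
        rw [hwa' (g α) i0 ⟨(i0 : ℕ), hIlt⟩ rfl, hi0]
        exact hxC
      · show x ∈ w (g β) ⟨s' + (j0 : ℕ), hJlt⟩
        rw [hwb' (g β) j0 ⟨s' + (j0 : ℕ), hJlt⟩ rfl, hj0]
        exact hxD
    · obtain ⟨hxm, C, hC, D, hD, hxC, hxD⟩ := hW4 (g β) hqS (g α) hpS x hx1 hx2
      obtain ⟨i0, hi0⟩ := (hu (g β) hqS).2.1 C hC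
      obtain ⟨j0, hj0⟩ := (hv (g α) hpS).2.1 D hD
      have hIlt : (i0 : ℕ) < s' + t' := by omega
      have hJlt : s' + (j0 : ℕ) < s' + t' := by omega
      apply hxm
      refine hsub (Set.mem_iUnion.mpr ⟨⟨s' + (j0 : ℕ), hJlt⟩, Set.mem_iUnion.mpr ⟨⟨(i0 : ℕ), hIlt⟩,
        Set.mem_iUnion.mpr ⟨?_, ?_, ?_⟩⟩⟩)
      · intro hEq
        have hv2 : s' + (j0 : ℕ) = (i0 : ℕ) := congrArg Fin.val hEq
        have hv3 := i0.isLt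
        omega
      · show x ∈ w (g α) ⟨s' + (j0 : ℕ), hJlt⟩
        rw [hwb' (g α) j0 ⟨s' + (j0 : ℕ), hJlt⟩ rfl, hj0]
        exact hxD
      · show x ∈ w (g β) ⟨(i0 : ℕ), hIlt⟩
        rw [hwa' (g β) i0 ⟨(i0 : ℕ), hIlt⟩ rfl, hi0]
        exact hxC
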